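/- Let H be a finitely generated abelian group of rank ≥ 2 and let q be an element of the total quotient ring of ℤ[H] such that q·(h − 1) ∈ ℤ[H] for every h ∈ H. Then q ∈ ℤ[H]. -/

import Mathlib

open MonoidAlgebra

/-- If `g` has infinite order, `of g - 1` is a nonzerodivisor in `ℤ[G]`. -/
lemma aux_sub_one_mem_nonZeroDivisors {G : Type*} [CommGroup G] {g : G}
    (hg : ¬ IsOfFinOrder g) :
    (MonoidAlgebra.of ℤ G g - 1) ∈ nonZeroDivisors (MonoidAlgebra ℤ G) := by
  rw [mem_nonZeroDivisors_iff_right]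
  intro f hf
  have h1 : f * MonoidAlgebra.of ℤ G g = f := by
    rw [mul_sub, mul_one, sub_eq_zero] at hf
    exact hf
  have hshift : ∀ y : G, f.coeff y = f.coeff (y * g) := by
    intro y
    have h2 : (f * MonoidAlgebra.of ℤ G g).coeff (y * g) = f.coeff (y * g) := by rw [h1]
    rw [MonoidAlgebra.of_apply, MonoidAlgebra.coeff_mul_single_apply] at h2
    rw [← h2, mul_inv_cancel_right, mul_one]
  have hpow : ∀ (n : ℕ) (y : G), f.coeff y = f.coeff (y * g ^ n) := by
    intro n
    induction n with
    | zero => simp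
    | succ n ih =>
      intro y
      rw [ih y, pow_succ, ← mul_assoc]
      exact hshift _
  by_contra hne
  obtain ⟨x, hx⟩ := Finsupp.support_nonempty_iff.mpr (mt MonoidAlgebra.coeff_eq_zero.mp hne)
  have hinj : Function.Injective fun n : ℕ => x * g ^ n := by
    intro m n h
    exact injective_pow_iff_not_isOfFinOrder.mpr hg (mul_left_cancel h)
  have hmem : ∀ n : ℕ, x * g ^ n ∈ (f.coeff.support : Set G) := by
    intro n
    simp only [Finset.coe_mem, Finsupp.mem_support_iff, Finset.mem_coe]
    rw [← hpow n x]
    exact Finsupp.mem_support_iff.mp hx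
  exact (Set.infinite_of_injective_forall_mem hinj hmem) f.coeff.support.finite_toSet

/-- `of g - 1` divides `of (g ^ m) - 1` for integer `m`. -/
lemma aux_dvd_zpow {G : Type*} [CommGroup G] (g : G) (m : ℤ) :
    (MonoidAlgebra.of ℤ G g - 1) ∣ (MonoidAlgebra.of ℤ G (g ^ m) - 1) := by
  have hnat : ∀ n : ℕ, (MonoidAlgebra.of ℤ G g - 1) ∣ (MonoidAlgebra.of ℤ G (g ^ n) - 1) := by
    intro n
    have h := sub_dvd_pow_sub_pow (MonoidAlgebra.of ℤ G g) 1 n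
    rwa [one_pow, ← map_pow] at h
  obtain ⟨n, rfl | rfl⟩ := Int.eq_nat_or_neg m
  · rw [zpow_natCast]
    exact hnat n
  · have key : MonoidAlgebra.of ℤ G (g ^ (-(n : ℤ))) - 1 =
        -(MonoidAlgebra.of ℤ G (g ^ (-(n : ℤ)))) * (MonoidAlgebra.of ℤ G (g ^ n) - 1) := by
      have hmul : MonoidAlgebra.of ℤ G (g ^ (-(n : ℤ))) * MonoidAlgebra.of ℤ G (g ^ n) = 1 := by
        rw [← map_mul, ← zpow_natCast g n, ← zpow_add, neg_add_cancel, zpow_zero, map_one]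
      rw [neg_mul, mul_sub, mul_one, hmul, neg_sub]
    rw [key]
    exact (hnat n).mul_left _

/-- If the image of `f` in `ℤ[G/⟨g⟩]` vanishes (expressed via a coset condition on a
homomorphism `φ`), then `of g - 1` divides `f`. -/
lemma aux_dvd_of_mapDomain_eq_zero {G Q : Type*} [CommGroup G] [CommGroup Q] (φ : G →* Q)
    (g : G) (hcoset : ∀ x y : G, φ x = φ y → ∃ m : ℤ, y = x * g ^ m) :
    ∀ f : MonoidAlgebra ℤ G, MonoidAlgebra.mapDomainRingHom ℤ φ f = 0 →
      (MonoidAlgebra.of ℤ G g - 1) ∣ f := by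
  classical
  suffices H : ∀ (n : ℕ) (f : MonoidAlgebra ℤ G), f.coeff.support.card = n →
      MonoidAlgebra.mapDomainRingHom ℤ φ f = 0 → (MonoidAlgebra.of ℤ G g - 1) ∣ f by
    exact fun f hf => H _ f rfl hf
  intro n
  induction n using Nat.strong_induction_on with
  | _ n ih =>
    intro f hcard hf
    rcases eq_or_ne f 0 with rfl | hne
    · exact dvd_zero _
    obtain ⟨x, hx⟩ := Finsupp.support_nonempty_iff.mpr (mt MonoidAlgebra.coeff_eq_zero.mp hne)
    have hfx : f.coeff x ≠ 0 := Finsupp.mem_support_iff.mp hx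
    -- find a different element of the support in the same coset
    have hexy : ∃ y ∈ f.coeff.support, y ≠ x ∧ φ y = φ x := by
      by_contra hno
      push_neg at hno
      have h0 : (Finsupp.mapDomain φ f.coeff) (φ x) = 0 := by
        have : Finsupp.mapDomain φ f.coeff = 0 := congrArg MonoidAlgebra.coeff hf
        rw [this]
        rfl
      rw [Finsupp.mapDomain, Finsupp.sum_apply] at h0
      have hsum : (f.coeff.sum fun a c => (Finsupp.single (φ a) c) (φ x)) = f.coeff x := by
        rw [Finsupp.sum]
        rw [Finset.sum_eq_single_of_mem x hx]
        · rw [Finsupp.single_apply, if_pos rfl]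
        · intro b hb hbx
          rw [Finsupp.single_apply, if_neg (hno b hb hbx)]
      rw [hsum] at h0
      exact hfx h0
    obtain ⟨y, hy, hyx, hφyx⟩ := hexy
    obtain ⟨m, hm⟩ := hcoset x y hφyx.symm
    set c : ℤ := f.coeff x with hc
    set t : MonoidAlgebra ℤ G :=
      MonoidAlgebra.single x c * (MonoidAlgebra.of ℤ G (g ^ m) - 1) with ht
    have htval : t = MonoidAlgebra.single y c - MonoidAlgebra.single x c := by
      rw [ht, mul_sub, mul_one, MonoidAlgebra.of_apply, MonoidAlgebra.single_mul_single,
        mul_one, ← hm]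
    set f' : MonoidAlgebra ℤ G := f + t with hf'
    have hπt : MonoidAlgebra.mapDomainRingHom ℤ φ t = 0 := by
      rw [htval, map_sub]
      show MonoidAlgebra.mapDomain φ (MonoidAlgebra.single y c) - MonoidAlgebra.mapDomain φ (MonoidAlgebra.single x c) = 0
      rw [MonoidAlgebra.mapDomain_single, MonoidAlgebra.mapDomain_single, hφyx, sub_self]
    have hπf' : MonoidAlgebra.mapDomainRingHom ℤ φ f' = 0 := by
      rw [hf', map_add, hf, hπt, add_zero]
    have hsupp : f'.coeff.support ⊆ f.coeff.support.erase x := by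
      intro a ha
      have ha' : f'.coeff a ≠ 0 := Finsupp.mem_support_iff.mp ha
      have hval : f'.coeff a = f.coeff a + (Finsupp.single y c) a - (Finsupp.single x c) a := by
        rw [hf', htval, MonoidAlgebra.coeff_add, MonoidAlgebra.coeff_sub, MonoidAlgebra.coeff_single,
          MonoidAlgebra.coeff_single, Finsupp.add_apply, Finsupp.sub_apply]
        ring
      rcases eq_or_ne a x with rfl | hax
      · exfalso
        apply ha'
        rw [hval, Finsupp.single_apply, if_neg hyx, Finsupp.single_eq_same, add_zero, hc,
          sub_self]
      · rw [Finset.mem_erase]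
        refine ⟨hax, ?_⟩
        rcases eq_or_ne a y with rfl | hay
        · exact hy
        · rw [Finsupp.mem_support_iff]
          rw [hval, Finsupp.single_eq_of_ne hay, Finsupp.single_eq_of_ne hax,
            add_zero, sub_zero] at ha'
          exact ha'
    have hcard' : f'.coeff.support.card < n := by
      calc f'.coeff.support.card ≤ (f.coeff.support.erase x).card := Finset.card_le_card hsupp
        _ < f.coeff.support.card := Finset.card_erase_lt_of_mem hx
        _ = n := hcard
    have hdvdf' : (MonoidAlgebra.of ℤ G g - 1) ∣ f' := ih _ hcard' f' rfl hπf'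
    have hdvdt : (MonoidAlgebra.of ℤ G g - 1) ∣ t := (aux_dvd_zpow g m).mul_left _
    have : f = f' - t := by rw [hf']; ring
    rw [this]
    exact hdvdf'.sub hdvdt

/-- If `H` is a finitely generated abelian group of rank at least 2 and `q` is an element
of the total quotient ring of `ℤ[H]` such that `q * (h - 1) ∈ ℤ[H]` for every `h ∈ H`,
then `q ∈ ℤ[H]`. -/
theorem filtration_trivial_of_rank_ge_two {H : Type*} [CommGroup H] [Group.FG H]
    (hrank : 2 ≤ Module.finrank ℚ (TensorProduct ℤ ℚ (Additive H)))
    (q : FractionRing (MonoidAlgebra ℤ H))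
    (hq : ∀ g : H, ∃ r : MonoidAlgebra ℤ H,
      algebraMap (MonoidAlgebra ℤ H) (FractionRing (MonoidAlgebra ℤ H)) r =
        q * algebraMap (MonoidAlgebra ℤ H) (FractionRing (MonoidAlgebra ℤ H))
          (MonoidAlgebra.of ℤ H g - 1)) :
    ∃ r : MonoidAlgebra ℤ H,
      algebraMap (MonoidAlgebra ℤ H) (FractionRing (MonoidAlgebra ℤ H)) r = q := by
  classical
  set V := TensorProduct ℤ ℚ (Additive H) with hV
  have hrank' : 2 ≤ Module.finrank ℚ V := hrank
  let e : H → V := fun h => (1 : ℚ) ⊗ₜ[ℤ] (Additive.ofMul h)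
  -- every element of V is in the ℚ-span of the range of e
  have hspan : ∀ v : V, v ∈ Submodule.span ℚ (Set.range e) := by
    intro v
    induction v using TensorProduct.induction_on with
    | zero => exact Submodule.zero_mem _
    | tmul r a =>
      have : r ⊗ₜ[ℤ] a = r • ((1 : ℚ) ⊗ₜ[ℤ] a : V) := by
        rw [TensorProduct.smul_tmul', smul_eq_mul, mul_one]
      rw [this]
      exact Submodule.smul_mem _ r (Submodule.subset_span ⟨Additive.toMul a, rfl⟩)
    | add u w hu hw => exact Submodule.add_mem _ hu hw
  -- e is compatible with powers
  have hepow : ∀ (h : H) (n : ℕ), e (h ^ n) = (n : ℚ) • e h := by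
    intro h n
    show (1 : ℚ) ⊗ₜ[ℤ] (Additive.ofMul (h ^ n)) = (n : ℚ) • ((1 : ℚ) ⊗ₜ[ℤ] Additive.ofMul h : V)
    rw [ofMul_pow, Nat.cast_smul_eq_nsmul, TensorProduct.tmul_smul]
  have hezpow : ∀ (h : H) (n : ℤ), e (h ^ n) = (n : ℚ) • e h := by
    intro h n
    show (1 : ℚ) ⊗ₜ[ℤ] (Additive.ofMul (h ^ n)) = (n : ℚ) • ((1 : ℚ) ⊗ₜ[ℤ] Additive.ofMul h : V)
    rw [ofMul_zpow, Int.cast_smul_eq_zsmul, TensorProduct.tmul_smul]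
  -- find x₁ with e x₁ ≠ 0
  have h1 : ∃ x : H, e x ≠ 0 := by
    by_contra h
    push_neg at h
    have hle : Module.finrank ℚ V ≤ 1 := by
      apply finrank_le_one (0 : V)
      intro w
      refine ⟨0, ?_⟩
      have hw := hspan w
      have hsub : Set.range e ⊆ ({0} : Set V) := by
        rintro _ ⟨a, rfl⟩
        exact h a
      have : Submodule.span ℚ (Set.range e) ≤ ⊥ := by
        rw [← Submodule.span_zero_singleton ℚ]
        exact Submodule.span_mono hsub
      have hw0 : w = 0 := this hw
      rw [hw0, smul_zero]
    omega
  obtain ⟨x₁, hx₁ne⟩ := h1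
  -- find x₂ with e x₂ not in the span of e x₁
  have h2 : ∃ x : H, e x ∉ Submodule.span ℚ ({e x₁} : Set V) := by
    by_contra h
    push_neg at h
    have hle : Module.finrank ℚ V ≤ 1 := by
      apply finrank_le_one (e x₁)
      intro w
      have hw := hspan w
      have : Submodule.span ℚ (Set.range e) ≤ Submodule.span ℚ ({e x₁} : Set V) := by
        rw [Submodule.span_le]
        rintro _ ⟨a, rfl⟩
        exact h a
      obtain ⟨c, hc⟩ := Submodule.mem_span_singleton.mp (this hw)
      exact ⟨c, hc⟩
    omega
  obtain ⟨x₂, hx₂ne⟩ := h2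
  -- x₁ has infinite order
  have hfo₁ : ¬ IsOfFinOrder x₁ := by
    intro hfin
    obtain ⟨n, hn, hpow⟩ := isOfFinOrder_iff_pow_eq_one.mp hfin
    have : e (x₁ ^ n) = 0 := by
      rw [hpow]
      show (1 : ℚ) ⊗ₜ[ℤ] (Additive.ofMul (1 : H)) = 0
      rw [ofMul_one, TensorProduct.tmul_zero]
    rw [hepow] at this
    have hn' : (n : ℚ) ≠ 0 := Nat.cast_ne_zero.mpr hn.ne'
    exact hx₁ne ((smul_eq_zero.mp this).resolve_left hn')
  -- quotient by ⟨x₁⟩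
  set N := Subgroup.zpowers x₁ with hN
  let φ : H →* H ⧸ N := QuotientGroup.mk' N
  -- the image of x₂ in the quotient has infinite order
  have hfo₂ : ¬ IsOfFinOrder (φ x₂) := by
    intro hfin
    obtain ⟨n, hn, hpow⟩ := isOfFinOrder_iff_pow_eq_one.mp hfin
    rw [← map_pow] at hpow
    have hmem : x₂ ^ n ∈ N := (QuotientGroup.eq_one_iff _).mp hpow
    obtain ⟨m, hm⟩ := Subgroup.mem_zpowers_iff.mp hmem
    -- x₁ ^ m = x₂ ^ n
    have heq : (m : ℚ) • e x₁ = (n : ℚ) • e x₂ := by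
      rw [← hezpow, ← hepow, hm]
    apply hx₂ne
    have hn' : (n : ℚ) ≠ 0 := Nat.cast_ne_zero.mpr hn.ne'
    have h4 : e x₂ = ((n : ℚ)⁻¹ * (m : ℚ)) • e x₁ := by
      have h5 := congrArg (fun v : V => (n : ℚ)⁻¹ • v) heq
      simp only [smul_smul, inv_mul_cancel₀ hn', one_smul] at h5
      exact h5.symm
    rw [h4]
    exact Submodule.smul_mem _ _ (Submodule.mem_span_singleton_self _)
  -- the coset condition
  have hcoset : ∀ a b : H, φ a = φ b → ∃ m : ℤ, b = a * x₁ ^ m := by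
    intro a b hab
    obtain ⟨z, hzN, hz⟩ := (QuotientGroup.mk'_eq_mk' (N := N)).mp hab
    obtain ⟨m, hm⟩ := Subgroup.mem_zpowers_iff.mp hzN
    exact ⟨m, by rw [hm, hz]⟩
  -- assemble
  obtain ⟨r₁, hr₁⟩ := hq x₁
  obtain ⟨r₂, hr₂⟩ := hq x₂
  have hinj : Function.Injective
      (algebraMap (MonoidAlgebra ℤ H) (FractionRing (MonoidAlgebra ℤ H))) :=
    IsFractionRing.injective (MonoidAlgebra ℤ H) (FractionRing (MonoidAlgebra ℤ H))
  have key : r₁ * (MonoidAlgebra.of ℤ H x₂ - 1) = r₂ * (MonoidAlgebra.of ℤ H x₁ - 1) := by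
    apply hinj
    rw [map_mul, map_mul, hr₁, hr₂]
    ring
  set π := MonoidAlgebra.mapDomainRingHom ℤ φ with hπ
  have hofmap : ∀ h : H, π (MonoidAlgebra.of ℤ H h) = MonoidAlgebra.of ℤ (H ⧸ N) (φ h) := by
    intro h
    rw [hπ, MonoidAlgebra.of_apply, MonoidAlgebra.of_apply]
    show MonoidAlgebra.mapDomain φ (MonoidAlgebra.single h 1) = MonoidAlgebra.single (φ h) 1
    exact MonoidAlgebra.mapDomain_single
  have hπx₁ : π (MonoidAlgebra.of ℤ H x₁ - 1) = 0 := by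
    have hφ1 : φ x₁ = 1 := (QuotientGroup.eq_one_iff _).mpr (Subgroup.mem_zpowers x₁)
    rw [map_sub, map_one, hofmap x₁, hφ1, map_one, sub_self]
  have hπx₂ : π (MonoidAlgebra.of ℤ H x₂ - 1) = MonoidAlgebra.of ℤ (H ⧸ N) (φ x₂) - 1 := by
    rw [map_sub, map_one, hofmap x₂]
  have hπr₁ : π r₁ = 0 := by
    have hz : π r₁ * (MonoidAlgebra.of ℤ (H ⧸ N) (φ x₂) - 1) = 0 := by
      rw [← hπx₂, ← map_mul, key, map_mul, hπx₁, mul_zero]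
    have hnz := aux_sub_one_mem_nonZeroDivisors (G := H ⧸ N) hfo₂
    exact mem_nonZeroDivisors_iff_right.mp hnz (π r₁) hz
  obtain ⟨s, hs⟩ : (MonoidAlgebra.of ℤ H x₁ - 1) ∣ r₁ :=
    aux_dvd_of_mapDomain_eq_zero φ x₁ hcoset r₁ hπr₁
  refine ⟨s, ?_⟩
  have hunit : IsUnit (algebraMap (MonoidAlgebra ℤ H) (FractionRing (MonoidAlgebra ℤ H))
      (MonoidAlgebra.of ℤ H x₁ - 1)) :=
    IsLocalization.map_units (FractionRing (MonoidAlgebra ℤ H))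
      ⟨_, aux_sub_one_mem_nonZeroDivisors hfo₁⟩
  apply hunit.mul_left_cancel
  rw [← map_mul, ← hs, hr₁]
  ring
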